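/- Under the hypotheses on (v₁,…,v_d; λ₁,…,λ_d; c; a) stated in the context, for all distinct j,k ∈ {1,…,n} and all fixed values of the remaining coordinates of t, the function e^{−tⱼ−tₖ}·vⱼᵀ(Hess g₀)(ξ(t))vₖ tends to 0 as tⱼ → −∞, and also tends to 0 as tₖ → −∞. -/

import Mathlib

open Filter

noncomputable section

/-- First directional derivative of `g` at `x` in direction `w`. -/
def pd1 {n : ℕ} (g : (Fin n → ℝ) → ℝ) (x w : Fin n → ℝ) : ℝ :=
  fderiv ℝ g x w

/-- Second derivative (Hessian bilinear form) of `g` at `x` applied to `w₁, w₂`. -/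
def pd2 {n : ℕ} (g : (Fin n → ℝ) → ℝ) (x w₁ w₂ : Fin n → ℝ) : ℝ :=
  fderiv ℝ (fun y => fderiv ℝ g y w₁) x w₂

/-- `ξ(t) = t₁ v₁ + ⋯ + tₙ vₙ`. -/
def xi {n : ℕ} (v : Fin n → (Fin n → ℝ)) (t : Fin n → ℝ) : Fin n → ℝ :=
  ∑ m, t m • v m

/-- The growth condition (∗) with data `(v₁,…,vₙ; a₁,…,aₙ)`. -/
def GrowthCondition {n : ℕ} (v : Fin n → (Fin n → ℝ)) (a : Fin n → ℝ)
    (g : (Fin n → ℝ) → ℝ) : Prop :=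
  (∀ j : Fin n, ∀ t : Fin n → ℝ, ∃ L : ℝ,
    Tendsto (fun s : ℝ =>
        2 * Real.exp (-2 * s) * (pd1 g (xi v (Function.update t j s)) (v j) + a j))
      atBot (nhds L) ∧
    Tendsto (fun s : ℝ =>
        Real.exp (-2 * s) * pd2 g (xi v (Function.update t j s)) (v j) (v j))
      atBot (nhds L)) ∧
  (∀ j k l : Fin n, ∀ t : Fin n → ℝ, ∃ L : ℝ,
    Tendsto (fun s : ℝ => pd2 g (xi v (Function.update t l s)) (v j) (v k))
      atBot (nhds L)) ∧
  (∀ j k : Fin n, j ≠ k → ∀ t : Fin n → ℝ,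
    Tendsto (fun s : ℝ =>
        Real.exp (-s - t k) * pd2 g (xi v (Function.update t j s)) (v j) (v k))
      atBot (nhds 0) ∧
    Tendsto (fun s : ℝ =>
        Real.exp (-(t j) - s) * pd2 g (xi v (Function.update t k s)) (v j) (v k))
      atBot (nhds 0))

/-- The affine-linear function `lᵢ(u) = ⟨u,vᵢ⟩ + λᵢ` (integer version). -/
def lfun {n d : ℕ} (v : Fin d → Fin n → ℤ) (lam : Fin d → ℤ) (i : Fin d)
    (u : Fin n → ℤ) : ℤ :=
  (∑ j, u j * v i j) + lam i

/-- The affine-linear function `lᵢ(x) = ⟨x,vᵢ⟩ + λᵢ` (real version). -/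
def lfunR {n d : ℕ} (v : Fin d → Fin n → ℤ) (lam : Fin d → ℤ) (i : Fin d)
    (x : Fin n → ℝ) : ℝ :=
  (∑ j, x j * (v i j : ℝ)) + (lam i : ℝ)

/-- Guillemin's potential
`g₀(ξ) = -(1/2) Σᵢ aᵢ log( (Σ_{u∈S} c_u lᵢ(u) e^{2⟨u,ξ⟩}) / (Σ_{u∈S} c_u e^{2⟨u,ξ⟩}) )`. -/
def gzero {n d : ℕ} (v : Fin d → Fin n → ℤ) (lam : Fin d → ℤ)
    (S : Finset (Fin n → ℤ)) (c : (Fin n → ℤ) → ℝ) (a : Fin d → ℤ)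
    (ξ : Fin n → ℝ) : ℝ :=
  -(1/2) * ∑ i : Fin d, (a i : ℝ) *
    Real.log ((∑ u ∈ S, c u * (lfun v lam i u : ℝ) * Real.exp (2 * ∑ m, (u m : ℝ) * ξ m)) /
      (∑ u ∈ S, c u * Real.exp (2 * ∑ m, (u m : ℝ) * ξ m)))

open Finset

def ipc {n : ℕ} (u : Fin n → ℤ) : (Fin n → ℝ) →L[ℝ] ℝ :=
  ∑ m, (u m : ℝ) • (ContinuousLinearMap.proj m : ((Fin n → ℝ) →L[ℝ] ℝ))

lemma ipc_apply {n : ℕ} (u : Fin n → ℤ) (y : Fin n → ℝ) :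
    ipc u y = ∑ m, (u m : ℝ) * y m := by
  simp [ipc, ContinuousLinearMap.sum_apply, mul_comm]

def Tsum {n : ℕ} (S : Finset (Fin n → ℤ)) (ψ : (Fin n → ℤ) → ℝ) (y : Fin n → ℝ) : ℝ :=
  ∑ u ∈ S, ψ u * Real.exp (2 * ipc u y)

lemma hasFDerivAt_Tsum {n : ℕ} (S : Finset (Fin n → ℤ)) (ψ : (Fin n → ℤ) → ℝ)
    (y : Fin n → ℝ) :
    HasFDerivAt (Tsum S ψ)
      (∑ u ∈ S, (ψ u * (Real.exp (2 * ipc u y) * 2)) • ipc u) y := by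
  unfold Tsum
  apply HasFDerivAt.fun_sum
  intro u _
  have h1 : HasFDerivAt (fun y : Fin n → ℝ => (2:ℝ) * ipc u y) ((2:ℝ) • ipc u) y :=
    (ipc u).hasFDerivAt.const_mul 2
  have h2 := h1.exp
  have h3 := h2.const_mul (ψ u)
  refine h3.congr_fderiv ?_
  rw [smul_smul, smul_smul]
  ring_nf

lemma fderiv_Tsum_apply {n : ℕ} (S : Finset (Fin n → ℤ)) (ψ : (Fin n → ℤ) → ℝ)
    (y w : Fin n → ℝ) :
    fderiv ℝ (Tsum S ψ) y w = 2 * Tsum S (fun u => ψ u * ipc u w) y := by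
  rw [(hasFDerivAt_Tsum S ψ y).fderiv]
  simp only [ContinuousLinearMap.sum_apply, ContinuousLinearMap.smul_apply, smul_eq_mul,
    Tsum, Finset.mul_sum]
  exact Finset.sum_congr rfl fun u _ => by ring

lemma Tsum_pos {n : ℕ} (S : Finset (Fin n → ℤ)) (ψ : (Fin n → ℤ) → ℝ)
    (h0 : ∀ u ∈ S, 0 ≤ ψ u) (hex : ∃ u ∈ S, 0 < ψ u) (y : Fin n → ℝ) :
    0 < Tsum S ψ y := by
  obtain ⟨u0, hu0S, hu0⟩ := hex
  exact Finset.sum_pos' (fun u hu => mul_nonneg (h0 u hu) (Real.exp_pos _).le)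
    ⟨u0, hu0S, mul_pos hu0 (Real.exp_pos _)⟩

section Main
variable {n d : ℕ} (v : Fin d → Fin n → ℤ) (lam : Fin d → ℤ)
  (S : Finset (Fin n → ℤ)) (c : (Fin n → ℤ) → ℝ) (a : Fin d → ℤ)

def psiF (i : Fin d) : (Fin n → ℤ) → ℝ := fun u => c u * (lfun v lam i u : ℝ)

lemma gzero_eq (hF : ∀ i y, 0 < Tsum S (psiF v lam c i) y) (hE : ∀ y, 0 < Tsum S c y) :
    gzero v lam S c a = fun y => -(1/2) * ∑ i, (a i : ℝ) *
      (Real.log (Tsum S (psiF v lam c i) y) - Real.log (Tsum S c y)) := by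
  funext y
  have h1 : ∀ i : Fin d, (∑ u ∈ S, c u * (lfun v lam i u : ℝ) *
      Real.exp (2 * ∑ m, (u m : ℝ) * y m)) = Tsum S (psiF v lam c i) y := by
    intro i; unfold Tsum psiF; exact Finset.sum_congr rfl fun u _ => by rw [ipc_apply]
  have h2 : (∑ u ∈ S, c u * Real.exp (2 * ∑ m, (u m : ℝ) * y m)) = Tsum S c y := by
    unfold Tsum; exact Finset.sum_congr rfl fun u _ => by rw [ipc_apply]
  unfold gzero
  simp only [h1, h2]
  congr 1
  exact Finset.sum_congr rfl fun i _ => by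
    rw [Real.log_div (hF i y).ne' (hE y).ne']

lemma hasFDerivAt_gzero (hF : ∀ i y, 0 < Tsum S (psiF v lam c i) y)
    (hE : ∀ y, 0 < Tsum S c y) (y : Fin n → ℝ) :
    HasFDerivAt (gzero v lam S c a)
      ((-(1/2) : ℝ) • ∑ i, (a i : ℝ) •
        ((Tsum S (psiF v lam c i) y)⁻¹ •
            (∑ u ∈ S, (psiF v lam c i u * (Real.exp (2 * ipc u y) * 2)) • ipc u)
          - (Tsum S c y)⁻¹ • (∑ u ∈ S, (c u * (Real.exp (2 * ipc u y) * 2)) • ipc u))) y := by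
  rw [gzero_eq v lam S c a hF hE]
  exact (HasFDerivAt.fun_sum fun i _ =>
    ((((hasFDerivAt_Tsum S _ y).log (hF i y).ne').sub
      ((hasFDerivAt_Tsum S c y).log (hE y).ne')).const_mul (a i : ℝ))).const_mul (-(1/2))

lemma pd1_eq (hF : ∀ i y, 0 < Tsum S (psiF v lam c i) y)
    (hE : ∀ y, 0 < Tsum S c y) (y w : Fin n → ℝ) :
    fderiv ℝ (gzero v lam S c a) y w = -(1/2) * ∑ i, (a i : ℝ) *
      ((Tsum S (psiF v lam c i) y)⁻¹ *
          (2 * Tsum S (fun u => psiF v lam c i u * ipc u w) y)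
        - (Tsum S c y)⁻¹ * (2 * Tsum S (fun u => c u * ipc u w) y)) := by
  rw [(hasFDerivAt_gzero v lam S c a hF hE y).fderiv]
  simp only [ContinuousLinearMap.smul_apply, ContinuousLinearMap.sum_apply,
    ContinuousLinearMap.sub_apply, smul_eq_mul, Tsum, Finset.mul_sum]
  refine Finset.sum_congr rfl fun i _ => ?_
  refine congrArg (fun z => -(1/2) * ((a i : ℝ) * z)) ?_
  exact congrArg₂ (· - ·) (Finset.sum_congr rfl fun u _ => by ring)
    (Finset.sum_congr rfl fun u _ => by ring)

lemma Dapply (y w : Fin n → ℝ) (φ : (Fin n → ℤ) → ℝ) :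
    (∑ u ∈ S, φ u * (Real.exp (2 * ipc u y) * 2) * ipc u w)
      = 2 * Tsum S (fun u => φ u * ipc u w) y := by
  unfold Tsum
  rw [Finset.mul_sum]
  exact Finset.sum_congr rfl fun u _ => by ring

lemma pd2_eq (hF : ∀ i y, 0 < Tsum S (psiF v lam c i) y)
    (hE : ∀ y, 0 < Tsum S c y) (y w₁ w₂ : Fin n → ℝ) :
    pd2 (gzero v lam S c a) y w₁ w₂ = ∑ i, (-(1/2) * (a i : ℝ)) *
      ((4 * Tsum S (fun u => psiF v lam c i u * ipc u w₁ * ipc u w₂) y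
          / Tsum S (psiF v lam c i) y
        - 4 * Tsum S (fun u => psiF v lam c i u * ipc u w₁) y
            * Tsum S (fun u => psiF v lam c i u * ipc u w₂) y
          / (Tsum S (psiF v lam c i) y)^2)
      - (4 * Tsum S (fun u => c u * ipc u w₁ * ipc u w₂) y / Tsum S c y
        - 4 * Tsum S (fun u => c u * ipc u w₁) y * Tsum S (fun u => c u * ipc u w₂) y
          / (Tsum S c y)^2)) := by
  have hrw : (fun y => fderiv ℝ (gzero v lam S c a) y w₁)
      = (fun y => -(1/2) * ∑ i, (a i : ℝ) *
        ((Tsum S (psiF v lam c i) y)⁻¹ *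
            (2 * Tsum S (fun u => psiF v lam c i u * ipc u w₁) y)
          - (Tsum S c y)⁻¹ * (2 * Tsum S (fun u => c u * ipc u w₁) y))) :=
    funext fun y => pd1_eq v lam S c a hF hE y w₁
  have H := (HasFDerivAt.fun_sum (fun (i : Fin d) (_ : i ∈ Finset.univ) =>
    (((((hasDerivAt_inv (hF i y).ne').comp_hasFDerivAt (𝕜 := ℝ) y
        (hasFDerivAt_Tsum S (psiF v lam c i) y)).mul
        ((hasFDerivAt_Tsum S (fun u => psiF v lam c i u * ipc u w₁) y).const_mul (2:ℝ))).sub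
      (((hasDerivAt_inv (hE y).ne').comp_hasFDerivAt (𝕜 := ℝ) y (hasFDerivAt_Tsum S c y)).mul
        ((hasFDerivAt_Tsum S (fun u => c u * ipc u w₁) y).const_mul (2:ℝ)))).const_mul
          (a i : ℝ)))).const_mul (-(1/2) : ℝ)
  have HG : HasFDerivAt (fun y => fderiv ℝ (gzero v lam S c a) y w₁)
      ((-(1/2) : ℝ) • ∑ i, (a i : ℝ) •
        (((Tsum S (psiF v lam c i) y)⁻¹ •
            ((2:ℝ) • (∑ u ∈ S, ((psiF v lam c i u * ipc u w₁) *
              (Real.exp (2 * ipc u y) * 2)) • ipc u))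
          + (2 * Tsum S (fun u => psiF v lam c i u * ipc u w₁) y) •
            ((-(Tsum S (psiF v lam c i) y ^ 2)⁻¹) •
              (∑ u ∈ S, (psiF v lam c i u * (Real.exp (2 * ipc u y) * 2)) • ipc u)))
        - ((Tsum S c y)⁻¹ •
            ((2:ℝ) • (∑ u ∈ S, ((c u * ipc u w₁) * (Real.exp (2 * ipc u y) * 2)) • ipc u))
          + (2 * Tsum S (fun u => c u * ipc u w₁) y) •
            ((-(Tsum S c y ^ 2)⁻¹) •
              (∑ u ∈ S, (c u * (Real.exp (2 * ipc u y) * 2)) • ipc u))))) y := by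
    rw [hrw]; exact H
  unfold pd2
  rw [HG.fderiv]
  simp only [ContinuousLinearMap.smul_apply, ContinuousLinearMap.sum_apply,
    ContinuousLinearMap.add_apply, ContinuousLinearMap.sub_apply, smul_eq_mul, Dapply]
  rw [Finset.mul_sum]
  refine Finset.sum_congr rfl fun i _ => ?_
  have h1 : Tsum S (psiF v lam c i) y ≠ 0 := (hF i y).ne'
  have h2 : Tsum S c y ≠ 0 := (hE y).ne'
  field_simp
  ring_nf

lemma cov_sym {ι : Type*} (s : Finset ι) (W f g : ι → ℝ) :
    (∑ u ∈ s, W u * (f u * g u)) * (∑ u ∈ s, W u)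
      - (∑ u ∈ s, W u * f u) * (∑ u ∈ s, W u * g u)
    = (1/2) * ∑ u ∈ s, ∑ u' ∈ s, (W u * W u') * ((f u - f u') * (g u - g u')) := by
  have expand : ∀ u u' : ι, (W u * W u') * ((f u - f u') * (g u - g u'))
      = (W u * (f u * g u)) * W u' + W u * (W u' * (f u' * g u'))
        - (W u * f u) * (W u' * g u') - (W u * g u) * (W u' * f u') := fun u u' => by ring
  simp_rw [expand, Finset.sum_sub_distrib, Finset.sum_add_distrib,
    ← Finset.sum_mul_sum]
  ring

lemma key (cj ck : Fin d) (tk : ℝ)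
    (hS' : ∀ u ∈ S, 0 ≤ lfun v lam cj u)
    (ψ : (Fin n → ℤ) → ℝ) (hψ0 : ∀ u ∈ S, 0 ≤ ψ u) (r : ℕ)
    (hr : ∀ u ∈ S, ψ u ≠ 0 → r ≤ (lfun v lam cj u).toNat)
    (hex : ∃ u ∈ S, (lfun v lam cj u).toNat = r ∧ 0 < ψ u)
    (w₁ w₂ : Fin n → ℝ)
    (hw₁ : ∀ u : Fin n → ℤ, ipc u w₁ = (lfun v lam cj u : ℝ) - (lam cj : ℝ))
    (hw₂ : ∀ u : Fin n → ℤ, ipc u w₂ = (lfun v lam ck u : ℝ) - (lam ck : ℝ))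
    (ys : ℝ → Fin n → ℝ) (R : (Fin n → ℤ) → ℝ)
    (hys : ∀ (u : Fin n → ℤ) (s : ℝ),
      ipc u (ys s) = s * ((lfun v lam cj u : ℝ) - (lam cj : ℝ)) + R u) :
    Filter.Tendsto (fun s : ℝ => Real.exp (-s - tk) *
      (4 * Tsum S (fun u => ψ u * ipc u w₁ * ipc u w₂) (ys s) / Tsum S ψ (ys s)
        - 4 * Tsum S (fun u => ψ u * ipc u w₁) (ys s)
            * Tsum S (fun u => ψ u * ipc u w₂) (ys s)
          / (Tsum S ψ (ys s))^2)) Filter.atBot (nhds 0) := by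
  obtain ⟨u1, hu1S, he1, hψ1⟩ := hex
  set Lj : (Fin n → ℤ) → ℝ := fun u => ((lfun v lam cj u : ℤ) : ℝ) with hLj
  set Lk : (Fin n → ℤ) → ℝ := fun u => ((lfun v lam ck u : ℤ) : ℝ) with hLk
  set e : (Fin n → ℤ) → ℕ := fun u => (lfun v lam cj u).toNat with hedef
  set ρ : (Fin n → ℤ) → ℝ := fun u => Real.exp (2 * R u) with hρ
  set lj : ℝ := ((lam cj : ℤ) : ℝ) with hlj
  set lk : ℝ := ((lam ck : ℤ) : ℝ) with hlk
  have hρpos : ∀ u, 0 < ρ u := fun u => Real.exp_pos _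
  have he : ∀ u ∈ S, ((e u : ℕ) : ℝ) = Lj u := by
    intro u hu
    have h := Int.toNat_of_nonneg (hS' u hu)
    simp only [hedef, hLj]
    exact_mod_cast h
  -- Tsum in terms of polynomial in exp(2s)
  have hT : ∀ (φ : (Fin n → ℤ) → ℝ) (s : ℝ), Tsum S φ (ys s)
      = Real.exp (-(2*s) * lj) * ∑ u ∈ S, φ u * ρ u * Real.exp (2*s) ^ (e u) := by
    intro φ s
    unfold Tsum
    rw [Finset.mul_sum]
    refine Finset.sum_congr rfl fun u hu => ?_
    have h1 : 2 * ipc u (ys s) = (e u : ℝ) * (2*s) + (-(2*s) * lj + 2 * R u) := by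
      rw [hys u s, he u hu]
      ring
    rw [h1, Real.exp_add, Real.exp_add, Real.exp_nat_mul]
    ring
  -- numerator as double sum, with power extraction
  set M : ℝ → ℝ := fun X => (1/2) * ∑ u ∈ S, ∑ u' ∈ S,
    (ψ u * ρ u) * ((ψ u' * ρ u') * ((Lj u - Lj u') * (Lk u - Lk u')
      * X ^ (e u + e u' - (2*r+1)))) with hM
  set Bq : ℝ → ℝ := fun X => ∑ u ∈ S, ψ u * ρ u * X ^ (e u - r) with hBqdef
  have hnum : ∀ X : ℝ,
      (∑ u ∈ S, (ψ u * ((Lj u - lj) * (Lk u - lk))) * ρ u * X ^ (e u))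
          * (∑ u ∈ S, ψ u * ρ u * X ^ (e u))
        - (∑ u ∈ S, (ψ u * (Lj u - lj)) * ρ u * X ^ (e u))
          * (∑ u ∈ S, (ψ u * (Lk u - lk)) * ρ u * X ^ (e u))
      = X ^ (2*r+1) * M X := by
    intro X
    have hc1 : ∀ (f : (Fin n → ℤ) → ℝ),
        (∑ u ∈ S, (ψ u * f u) * ρ u * X ^ (e u))
          = ∑ u ∈ S, (ψ u * ρ u * X ^ (e u)) * f u :=
      fun f => Finset.sum_congr rfl fun u _ => by ring
    have hc2 : (∑ u ∈ S, (ψ u * ((Lj u - lj) * (Lk u - lk))) * ρ u * X ^ (e u))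
        = ∑ u ∈ S, (ψ u * ρ u * X ^ (e u))
            * ((fun u => Lj u - lj) u * ((fun u => Lk u - lk) u)) :=
      Finset.sum_congr rfl fun u _ => by ring
    have hcov := cov_sym S (fun u => ψ u * ρ u * X ^ (e u))
      (fun u => Lj u - lj) (fun u => Lk u - lk)
    rw [hc2, hc1 (fun u => Lj u - lj), hc1 (fun u => Lk u - lk), hcov]
    have hswap : X ^ (2*r+1) * M X = (1/2) * ∑ u ∈ S, ∑ u' ∈ S, X^(2*r+1) *
        ((ψ u * ρ u) * ((ψ u' * ρ u') * ((Lj u - Lj u') * (Lk u - Lk u')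
          * X ^ (e u + e u' - (2*r+1))))) := by
      rw [hM]
      simp_rw [← Finset.mul_sum]
      ring
    rw [hswap]
    refine congrArg (fun z => (1/2 : ℝ) * z) ?_
    refine Finset.sum_congr rfl fun u hu => Finset.sum_congr rfl fun u' hu' => ?_
    by_cases h1 : ψ u = 0
    · simp [h1]
    by_cases h2 : ψ u' = 0
    · simp [h2]
    by_cases h3 : Lj u = Lj u'
    · simp [h3]
    have h4 : r ≤ e u := hr u hu h1
    have h5 : r ≤ e u' := hr u' hu' h2
    have h6 : e u ≠ e u' := by
      intro hq
      exact h3 (by rw [← he u hu, ← he u' hu', hq])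
    have hee : e u + e u' = (2*r+1) + (e u + e u' - (2*r+1)) := by omega
    have hp : X ^ (e u) * X ^ (e u') = X ^ (2*r+1) * X ^ (e u + e u' - (2*r+1)) := by
      rw [← pow_add, ← pow_add, ← hee]
    linear_combination (ψ u * ρ u * (ψ u' * ρ u')
      * ((Lj u - Lj u') * (Lk u - Lk u'))) * hp
  have hden : ∀ X : ℝ, (∑ u ∈ S, ψ u * ρ u * X ^ (e u)) = X ^ r * Bq X := by
    intro X
    rw [hBqdef]
    simp only [Finset.mul_sum]
    refine Finset.sum_congr rfl fun u hu => ?_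
    by_cases h1 : ψ u = 0
    · simp [h1]
    have h4 : r ≤ e u := hr u hu h1
    have hee : e u = r + (e u - r) := by omega
    have hp : X ^ (e u) = X ^ r * X ^ (e u - r) := by rw [← pow_add, ← hee]
    linear_combination (ψ u * ρ u) * hp
  have he1' : e u1 = r := he1
  have hBqpos : ∀ X : ℝ, 0 ≤ X → 0 < Bq X := by
    intro X hX
    rw [hBqdef]
    refine Finset.sum_pos' (fun u hu => ?_) ⟨u1, hu1S, ?_⟩
    · exact mul_nonneg (mul_nonneg (hψ0 u hu) (hρpos u).le) (pow_nonneg hX _)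
    · rw [show e u1 - r = 0 by omega, pow_zero, mul_one]
      exact mul_pos hψ1 (hρpos u1)
  have hBqcont : Continuous Bq := by
    rw [hBqdef]
    exact continuous_finset_sum _ fun u _ => continuous_const.mul (continuous_pow _)
  have hMcont : Continuous M := by
    rw [hM]
    exact continuous_const.mul (continuous_finset_sum _ fun u _ =>
      continuous_finset_sum _ fun u' _ => continuous_const.mul
        (continuous_const.mul (continuous_const.mul (continuous_pow _))))
  have hTpos : ∀ s : ℝ, 0 < Tsum S ψ (ys s) :=
    fun s => Tsum_pos S ψ hψ0 ⟨u1, hu1S, hψ1⟩ (ys s)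
  -- pointwise identity
  have hident : ∀ s : ℝ, Real.exp (-s - tk) *
      (4 * Tsum S (fun u => ψ u * ipc u w₁ * ipc u w₂) (ys s) / Tsum S ψ (ys s)
        - 4 * Tsum S (fun u => ψ u * ipc u w₁) (ys s)
            * Tsum S (fun u => ψ u * ipc u w₂) (ys s)
          / (Tsum S ψ (ys s))^2)
      = (Real.exp (-tk) * 4) * (Real.exp s *
          (M (Real.exp s ^ 2) / (Bq (Real.exp s ^ 2))^2)) := by
    intro s
    have hw12 : Tsum S (fun u => ψ u * ipc u w₁ * ipc u w₂) (ys s)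
        = Tsum S (fun u => ψ u * ((Lj u - lj) * (Lk u - lk))) (ys s) := by
      unfold Tsum
      exact Finset.sum_congr rfl fun u _ => by simp only [hw₁, hw₂, hLj, hLk]; ring
    have hwj : Tsum S (fun u => ψ u * ipc u w₁) (ys s)
        = Tsum S (fun u => ψ u * (Lj u - lj)) (ys s) := by
      unfold Tsum
      exact Finset.sum_congr rfl fun u _ => by simp only [hw₁, hLj]
    have hwk : Tsum S (fun u => ψ u * ipc u w₂) (ys s)
        = Tsum S (fun u => ψ u * (Lk u - lk)) (ys s) := by
      unfold Tsum
      exact Finset.sum_congr rfl fun u _ => by simp only [hw₂, hLk]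
    have hX2 : Real.exp (2*s) = Real.exp s ^ 2 := by
      rw [two_mul, Real.exp_add, sq]
    have hstk : Real.exp (-s - tk) = (Real.exp s * Real.exp tk)⁻¹ := by
      rw [← Real.exp_add, ← Real.exp_neg]
      congr 1
      ring
    have htk : Real.exp (-tk) = (Real.exp tk)⁻¹ := Real.exp_neg tk
    have hden' := hden (Real.exp s ^ 2)
    have hA := hnum (Real.exp s ^ 2)
    rw [hden'] at hA
    rw [hw12, hwj, hwk, hT _ s, hT _ s, hT _ s, hT _ s, hX2, hden', hstk, htk]
    set C := Real.exp (-(2*s) * lj) with hCdef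
    set E1 := Real.exp s with hE1def
    set Etk := Real.exp tk with hEtkdef
    set Q := Bq (E1 ^ 2) with hQdef
    set m := M (E1 ^ 2) with hmdef
    set A := ∑ u ∈ S, (ψ u * ((Lj u - lj) * (Lk u - lk))) * ρ u * (E1^2) ^ (e u) with hAdef
    set B1 := ∑ u ∈ S, (ψ u * (Lj u - lj)) * ρ u * (E1^2) ^ (e u) with hB1def
    set B2 := ∑ u ∈ S, (ψ u * (Lk u - lk)) * ρ u * (E1^2) ^ (e u) with hB2def
    set Y := ((E1 ^ 2) ^ r : ℝ) with hYdef
    have hp1 : ((E1 ^ 2) : ℝ)^(2*r+1) = Y^2 * E1 ^ 2 := by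
      rw [hYdef, show 2*r+1 = r*2+1 by ring, pow_succ, pow_mul]
    rw [hp1] at hA
    have hE1ne : E1 ≠ 0 := Real.exp_ne_zero s
    have hCne : C ≠ 0 := Real.exp_ne_zero _
    have hQne : Q ≠ 0 := (hBqpos _ (by positivity)).ne'
    have hEtkne : Etk ≠ 0 := Real.exp_ne_zero tk
    have hYne : Y ≠ 0 := by rw [hYdef]; positivity
    have hYQne : Y * Q ≠ 0 := mul_ne_zero hYne hQne
    have hinner : 4 * (C * A) / (C * (Y * Q)) - 4 * (C * B1) * (C * B2) / (C * (Y * Q))^2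
        = 4 * E1^2 * m / Q^2 := by
      rw [mul_div_assoc, mul_div_mul_left _ _ hCne]
      rw [show 4 * (C * B1) * (C * B2) = C^2 * (4 * (B1 * B2)) from by ring]
      rw [mul_pow C (Y * Q) 2, mul_div_mul_left _ _ (pow_ne_zero 2 hCne), mul_div_assoc]
      rw [show A / (Y * Q) = A * (Y * Q) / (Y * Q)^2 from by
        rw [sq, mul_div_mul_right _ _ hYQne]]
      rw [← mul_sub, div_sub_div_same, hA]
      rw [show Y^2 * E1^2 * m = Y^2 * (E1^2 * m) from by ring]
      rw [mul_pow Y Q 2, mul_div_mul_left _ _ (pow_ne_zero 2 hYne)]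
      ring
    rw [hinner]
    field_simp
  -- the limit
  have hx0 : Filter.Tendsto (fun s : ℝ => Real.exp s ^ 2) Filter.atBot (nhds 0) := by
    have := Real.tendsto_exp_atBot
    simpa using (this.pow 2)
  have hMlim : Filter.Tendsto (fun s : ℝ => M (Real.exp s ^ 2)) Filter.atBot (nhds (M 0)) :=
    (hMcont.tendsto 0).comp hx0
  have hBlim : Filter.Tendsto (fun s : ℝ => Bq (Real.exp s ^ 2)) Filter.atBot
      (nhds (Bq 0)) := (hBqcont.tendsto 0).comp hx0
  have hBne : (Bq 0)^2 ≠ 0 := (pow_ne_zero 2 (hBqpos 0 le_rfl).ne')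
  have hdiv : Filter.Tendsto (fun s : ℝ => M (Real.exp s ^ 2) / (Bq (Real.exp s ^ 2))^2)
      Filter.atBot (nhds (M 0 / (Bq 0)^2)) := hMlim.div (hBlim.pow 2) hBne
  have hfin := (Real.tendsto_exp_atBot.mul hdiv).const_mul (Real.exp (-tk) * 4)
  rw [show (Real.exp (-tk) * 4) * ((0:ℝ) * (M 0 / (Bq 0)^2)) = 0 by ring] at hfin
  exact hfin.congr fun s => (hident s).symm

lemma pd2_symm (hF : ∀ i y, 0 < Tsum S (psiF v lam c i) y)
    (hE : ∀ y, 0 < Tsum S c y) (y w₁ w₂ : Fin n → ℝ) :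
    pd2 (gzero v lam S c a) y w₁ w₂ = pd2 (gzero v lam S c a) y w₂ w₁ := by
  rw [pd2_eq v lam S c a hF hE y w₁ w₂, pd2_eq v lam S c a hF hE y w₂ w₁]
  refine Finset.sum_congr rfl fun i _ => ?_
  have h12 : ∀ φ : (Fin n → ℤ) → ℝ,
      Tsum S (fun u => φ u * ipc u w₁ * ipc u w₂) y
        = Tsum S (fun u => φ u * ipc u w₂ * ipc u w₁) y := fun φ => by
    unfold Tsum
    exact Finset.sum_congr rfl fun u _ => by ring
  rw [h12, h12]
  ring

lemma ipc_w (hnd : n ≤ d) (m : Fin n) (u : Fin n → ℤ) :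
    ipc u (fun p => (v (Fin.castLE hnd m) p : ℝ))
      = (lfun v lam (Fin.castLE hnd m) u : ℝ) - (lam (Fin.castLE hnd m) : ℝ) := by
  rw [ipc_apply]
  unfold lfun
  push_cast
  ring

lemma ipc_xi_gen (V : Fin n → Fin n → ℝ) (t' : Fin n → ℝ) (u : Fin n → ℤ) :
    ipc u (xi V t') = ∑ m, t' m * ipc u (V m) := by
  rw [ipc_apply]
  have hx : ∀ p, xi V t' p = ∑ m, t' m * V m p := by
    intro p
    unfold xi
    rw [Finset.sum_apply]
    exact Finset.sum_congr rfl fun m _ => rfl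
  calc (∑ p, (u p : ℝ) * xi V t' p)
      = ∑ p, ∑ m, t' m * ((u p : ℝ) * V m p) := by
        refine Finset.sum_congr rfl fun p _ => ?_
        rw [hx p, Finset.mul_sum]
        exact Finset.sum_congr rfl fun m _ => by ring
    _ = ∑ m, ∑ p, t' m * ((u p : ℝ) * V m p) := Finset.sum_comm
    _ = ∑ m, t' m * ipc u (V m) := by
        refine Finset.sum_congr rfl fun m _ => ?_
        rw [ipc_apply, Finset.mul_sum]

lemma sum_update (G t : Fin n → ℝ) (j : Fin n) (s : ℝ) :
    ∑ m, Function.update t j s m * G m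
      = s * G j + ∑ m ∈ Finset.univ.erase j, t m * G m := by
  rw [← Finset.add_sum_erase _ (fun m => Function.update t j s m * G m) (Finset.mem_univ j)]
  congr 1
  · rw [Function.update_self]
  · exact Finset.sum_congr rfl fun m hm => by
      rw [Function.update_of_ne (Finset.ne_of_mem_erase hm)]

lemma mainpart (hnd : n ≤ d)
    (hS : ∀ u : Fin n → ℤ, u ∈ S ↔ ∀ i : Fin d, 0 ≤ lfun v lam i u)
    (hc : ∀ u ∈ S, 0 ≤ c u)
    (hu0 : ∃ u₀ ∈ S, 0 < c u₀ ∧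
      (∀ j : Fin n, lfun v lam (Fin.castLE hnd j) u₀ = 0) ∧
      (∀ i : Fin d, n ≤ (i : ℕ) → 1 ≤ lfun v lam i u₀))
    (huk : ∀ k : Fin n, ∃ u ∈ S, 0 < c u ∧
      lfun v lam (Fin.castLE hnd k) u = 1 ∧
      (∀ j : Fin n, j ≠ k → lfun v lam (Fin.castLE hnd j) u = 0))
    (j k : Fin n) (t : Fin n → ℝ) :
    Filter.Tendsto (fun s : ℝ => Real.exp (-s - t k) *
      pd2 (gzero v lam S c a)
        (xi (fun m p => (v (Fin.castLE hnd m) p : ℝ)) (Function.update t j s))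
        (fun p => (v (Fin.castLE hnd j) p : ℝ))
        (fun p => (v (Fin.castLE hnd k) p : ℝ)))
      Filter.atBot (nhds 0) := by
  obtain ⟨u0, hu0S, hc0, hl0, hup⟩ := hu0
  have hψ0 : ∀ i : Fin d, ∀ u ∈ S, 0 ≤ psiF v lam c i u := fun i u hu =>
    mul_nonneg (hc u hu) (by exact_mod_cast (hS u).mp hu i)
  have hFex : ∀ i : Fin d, ∃ u ∈ S, 0 < psiF v lam c i u := by
    intro i
    by_cases h : (i : ℕ) < n
    · obtain ⟨u2, hu2S, hc2, hl2, _⟩ := huk ⟨i, h⟩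
      have hii : Fin.castLE hnd ⟨i, h⟩ = i := rfl
      refine ⟨u2, hu2S, ?_⟩
      have : (0:ℝ) < (lfun v lam i u2 : ℝ) := by
        rw [← hii, hl2]; norm_num
      exact mul_pos hc2 this
    · refine ⟨u0, hu0S, mul_pos hc0 ?_⟩
      have h1 := hup i (le_of_not_gt h)
      exact_mod_cast lt_of_lt_of_le Int.zero_lt_one h1
  have hF : ∀ i y, 0 < Tsum S (psiF v lam c i) y :=
    fun i y => Tsum_pos S _ (hψ0 i) (hFex i) y
  have hE : ∀ y, 0 < Tsum S c y := fun y => Tsum_pos S c hc ⟨u0, hu0S, hc0⟩ y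
  have hSj : ∀ u ∈ S, 0 ≤ lfun v lam (Fin.castLE hnd j) u :=
    fun u hu => (hS u).mp hu _
  have hw₁ := ipc_w v lam hnd j
  have hw₂ := ipc_w v lam hnd k
  have hys : ∀ (u : Fin n → ℤ) (s : ℝ),
      ipc u (xi (fun m p => (v (Fin.castLE hnd m) p : ℝ)) (Function.update t j s))
        = s * ((lfun v lam (Fin.castLE hnd j) u : ℝ) - (lam (Fin.castLE hnd j) : ℝ))
          + ∑ m ∈ Finset.univ.erase j, t m *
              ((lfun v lam (Fin.castLE hnd m) u : ℝ) - (lam (Fin.castLE hnd m) : ℝ)) := by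
    intro u s
    rw [ipc_xi_gen, sum_update (fun m => ipc u
      ((fun m p => (v (Fin.castLE hnd m) p : ℝ)) m)) t j s]
    rw [show ipc u ((fun (m : Fin n) (p : Fin n) => (v (Fin.castLE hnd m) p : ℝ)) j)
      = (lfun v lam (Fin.castLE hnd j) u : ℝ) - (lam (Fin.castLE hnd j) : ℝ)
      from ipc_w v lam hnd j u]
    congr 1
    refine Finset.sum_congr rfl fun m _ => ?_
    rw [show ipc u ((fun (m : Fin n) (p : Fin n) => (v (Fin.castLE hnd m) p : ℝ)) m)
      = (lfun v lam (Fin.castLE hnd m) u : ℝ) - (lam (Fin.castLE hnd m) : ℝ)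
      from ipc_w v lam hnd m u]
  have keyC := key v lam S (Fin.castLE hnd j) (Fin.castLE hnd k) (t k) hSj
    c hc 0 (fun u hu _ => Nat.zero_le _)
    ⟨u0, hu0S, by rw [hl0 j]; rfl, hc0⟩
    (fun p => (v (Fin.castLE hnd j) p : ℝ)) (fun p => (v (Fin.castLE hnd k) p : ℝ))
    hw₁ hw₂
    (fun s => xi (fun m p => (v (Fin.castLE hnd m) p : ℝ)) (Function.update t j s))
    _ hys
  have keyF : ∀ i : Fin d, Filter.Tendsto (fun s : ℝ => Real.exp (-s - t k) *
      (4 * Tsum S (fun u => psiF v lam c i u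
            * ipc u (fun p => (v (Fin.castLE hnd j) p : ℝ))
            * ipc u (fun p => (v (Fin.castLE hnd k) p : ℝ)))
          (xi (fun m p => (v (Fin.castLE hnd m) p : ℝ)) (Function.update t j s))
        / Tsum S (psiF v lam c i)
          (xi (fun m p => (v (Fin.castLE hnd m) p : ℝ)) (Function.update t j s))
      - 4 * Tsum S (fun u => psiF v lam c i u
            * ipc u (fun p => (v (Fin.castLE hnd j) p : ℝ)))
          (xi (fun m p => (v (Fin.castLE hnd m) p : ℝ)) (Function.update t j s))
        * Tsum S (fun u => psiF v lam c i u
            * ipc u (fun p => (v (Fin.castLE hnd k) p : ℝ)))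
          (xi (fun m p => (v (Fin.castLE hnd m) p : ℝ)) (Function.update t j s))
        / (Tsum S (psiF v lam c i)
          (xi (fun m p => (v (Fin.castLE hnd m) p : ℝ)) (Function.update t j s)))^2))
      Filter.atBot (nhds 0) := by
    intro i
    by_cases h : (i : ℕ) < n
    · by_cases hj : i = Fin.castLE hnd j
      · -- r = 1
        obtain ⟨u2, hu2S, hc2, hl2, _⟩ := huk j
        refine key v lam S (Fin.castLE hnd j) (Fin.castLE hnd k) (t k) hSj
          (psiF v lam c i) (hψ0 i) 1 ?_ ⟨u2, hu2S, by rw [hl2]; rfl, ?_⟩ _ _ hw₁ hw₂ _ _ hys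
        · intro u hu hne
          have h2 : (lfun v lam i u : ℝ) ≠ 0 := right_ne_zero_of_mul hne
          have h3 : lfun v lam i u ≠ 0 := fun hz => h2 (by rw [hz]; norm_num)
          have h4 : 0 ≤ lfun v lam (Fin.castLE hnd j) u := hSj u hu
          rw [← hj] at h4 ⊢
          omega
        · have : (0:ℝ) < (lfun v lam i u2 : ℝ) := by rw [hj, hl2]; norm_num
          exact mul_pos hc2 this
      · -- r = 0, i < n, i ≠ cj
        have hii : Fin.castLE hnd ⟨i, h⟩ = i := rfl
        obtain ⟨u2, hu2S, hc2, hl2, hl2'⟩ := huk ⟨i, h⟩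
        have hji : j ≠ (⟨i, h⟩ : Fin n) := by
          intro hq
          exact hj (by rw [← hii, ← hq])
        refine key v lam S (Fin.castLE hnd j) (Fin.castLE hnd k) (t k) hSj
          (psiF v lam c i) (hψ0 i) 0 (fun u hu _ => Nat.zero_le _)
          ⟨u2, hu2S, by rw [hl2' j hji]; rfl, ?_⟩ _ _ hw₁ hw₂ _ _ hys
        have : (0:ℝ) < (lfun v lam i u2 : ℝ) := by rw [← hii, hl2]; norm_num
        exact mul_pos hc2 this
    · -- r = 0, i ≥ n
      refine key v lam S (Fin.castLE hnd j) (Fin.castLE hnd k) (t k) hSj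
        (psiF v lam c i) (hψ0 i) 0 (fun u hu _ => Nat.zero_le _)
        ⟨u0, hu0S, by rw [hl0 j]; rfl, ?_⟩ _ _ hw₁ hw₂ _ _ hys
      have h1 := hup i (le_of_not_gt h)
      have : (0:ℝ) < (lfun v lam i u0 : ℝ) :=
        by exact_mod_cast lt_of_lt_of_le Int.zero_lt_one h1
      exact mul_pos hc0 this
  have heq : ∀ s : ℝ, Real.exp (-s - t k) *
      pd2 (gzero v lam S c a)
        (xi (fun m p => (v (Fin.castLE hnd m) p : ℝ)) (Function.update t j s))
        (fun p => (v (Fin.castLE hnd j) p : ℝ))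
        (fun p => (v (Fin.castLE hnd k) p : ℝ))
      = ∑ i : Fin d, (-(1/2) * (a i : ℝ)) *
          ((fun s : ℝ => Real.exp (-s - t k) *
      (4 * Tsum S (fun u => psiF v lam c i u
            * ipc u (fun p => (v (Fin.castLE hnd j) p : ℝ))
            * ipc u (fun p => (v (Fin.castLE hnd k) p : ℝ)))
          (xi (fun m p => (v (Fin.castLE hnd m) p : ℝ)) (Function.update t j s))
        / Tsum S (psiF v lam c i)
          (xi (fun m p => (v (Fin.castLE hnd m) p : ℝ)) (Function.update t j s))
      - 4 * Tsum S (fun u => psiF v lam c i u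
            * ipc u (fun p => (v (Fin.castLE hnd j) p : ℝ)))
          (xi (fun m p => (v (Fin.castLE hnd m) p : ℝ)) (Function.update t j s))
        * Tsum S (fun u => psiF v lam c i u
            * ipc u (fun p => (v (Fin.castLE hnd k) p : ℝ)))
          (xi (fun m p => (v (Fin.castLE hnd m) p : ℝ)) (Function.update t j s))
        / (Tsum S (psiF v lam c i)
          (xi (fun m p => (v (Fin.castLE hnd m) p : ℝ)) (Function.update t j s)))^2)) s
          - (fun s : ℝ => Real.exp (-s - t k) *
      (4 * Tsum S (fun u => c u
            * ipc u (fun p => (v (Fin.castLE hnd j) p : ℝ))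
            * ipc u (fun p => (v (Fin.castLE hnd k) p : ℝ)))
          (xi (fun m p => (v (Fin.castLE hnd m) p : ℝ)) (Function.update t j s))
        / Tsum S c
          (xi (fun m p => (v (Fin.castLE hnd m) p : ℝ)) (Function.update t j s))
      - 4 * Tsum S (fun u => c u
            * ipc u (fun p => (v (Fin.castLE hnd j) p : ℝ)))
          (xi (fun m p => (v (Fin.castLE hnd m) p : ℝ)) (Function.update t j s))
        * Tsum S (fun u => c u
            * ipc u (fun p => (v (Fin.castLE hnd k) p : ℝ)))
          (xi (fun m p => (v (Fin.castLE hnd m) p : ℝ)) (Function.update t j s))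
        / (Tsum S c
          (xi (fun m p => (v (Fin.castLE hnd m) p : ℝ)) (Function.update t j s)))^2)) s) := by
    intro s
    rw [pd2_eq v lam S c a hF hE]
    rw [Finset.mul_sum]
    exact Finset.sum_congr rfl fun i _ => by ring
  refine Filter.Tendsto.congr (fun s => (heq s).symm) ?_
  have hsum := tendsto_finset_sum (Finset.univ : Finset (Fin d))
    (fun i _ => (((keyF i).sub keyC).const_mul (-(1/2) * (a i : ℝ))))
  simpa using hsum

end Main

/-- for distinct `j,k` and fixed remaining coordinates,
`e^{−tⱼ−tₖ}·vⱼᵀ(Hess g₀)(ξ(t))vₖ` tends to `0` as `tⱼ → −∞`, and also as `tₖ → −∞`. -/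
theorem gzero_mixed_second_derivative_limit (n d : ℕ) (hnd : n ≤ d)
    (v : Fin d → Fin n → ℤ) (lam : Fin d → ℤ)
    (S : Finset (Fin n → ℤ))
    (hS : ∀ u : Fin n → ℤ, u ∈ S ↔ ∀ i : Fin d, 0 ≤ lfun v lam i u)
    (hbdd : Bornology.IsBounded {x : Fin n → ℝ | ∀ i : Fin d, 0 ≤ lfunR v lam i x})
    (c : (Fin n → ℤ) → ℝ) (hc : ∀ u ∈ S, 0 ≤ c u)
    (hbasis : IsUnit (Matrix.of fun j k : Fin n => v (Fin.castLE hnd j) k).det)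
    (hu0 : ∃ u₀ ∈ S, 0 < c u₀ ∧
      (∀ j : Fin n, lfun v lam (Fin.castLE hnd j) u₀ = 0) ∧
      (∀ i : Fin d, n ≤ (i : ℕ) → 1 ≤ lfun v lam i u₀))
    (huk : ∀ k : Fin n, ∃ u ∈ S, 0 < c u ∧
      lfun v lam (Fin.castLE hnd k) u = 1 ∧
      (∀ j : Fin n, j ≠ k → lfun v lam (Fin.castLE hnd j) u = 0))
    (a : Fin d → ℤ)
    (j k : Fin n) (hjk : j ≠ k) (t : Fin n → ℝ) :
    Tendsto (fun s : ℝ =>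
        Real.exp (-s - t k) *
          pd2 (gzero v lam S c a)
            (xi (fun m p => (v (Fin.castLE hnd m) p : ℝ)) (Function.update t j s))
            (fun p => (v (Fin.castLE hnd j) p : ℝ))
            (fun p => (v (Fin.castLE hnd k) p : ℝ)))
      atBot (nhds 0) ∧
    Tendsto (fun s : ℝ =>
        Real.exp (-(t j) - s) *
          pd2 (gzero v lam S c a)
            (xi (fun m p => (v (Fin.castLE hnd m) p : ℝ)) (Function.update t k s))
            (fun p => (v (Fin.castLE hnd j) p : ℝ))
            (fun p => (v (Fin.castLE hnd k) p : ℝ)))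
      atBot (nhds 0) := by
  obtain ⟨u0, hu0S, hc0, hl0, hup⟩ := hu0
  have hψ0 : ∀ i : Fin d, ∀ u ∈ S, 0 ≤ psiF v lam c i u := fun i u hu =>
    mul_nonneg (hc u hu) (by exact_mod_cast (hS u).mp hu i)
  have hFex : ∀ i : Fin d, ∃ u ∈ S, 0 < psiF v lam c i u := by
    intro i
    by_cases h : (i : ℕ) < n
    · obtain ⟨u2, hu2S, hc2, hl2, _⟩ := huk ⟨i, h⟩
      have hii : Fin.castLE hnd ⟨i, h⟩ = i := rfl
      refine ⟨u2, hu2S, ?_⟩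
      have : (0:ℝ) < (lfun v lam i u2 : ℝ) := by
        rw [← hii, hl2]; norm_num
      exact mul_pos hc2 this
    · refine ⟨u0, hu0S, mul_pos hc0 ?_⟩
      have h1 := hup i (le_of_not_gt h)
      exact_mod_cast lt_of_lt_of_le Int.zero_lt_one h1
  have hF : ∀ i y, 0 < Tsum S (psiF v lam c i) y :=
    fun i y => Tsum_pos S _ (hψ0 i) (hFex i) y
  have hE : ∀ y, 0 < Tsum S c y := fun y => Tsum_pos S c hc ⟨u0, hu0S, hc0⟩ y
  constructor
  · exact mainpart v lam S c a hnd hS hc ⟨u0, hu0S, hc0, hl0, hup⟩ huk j k t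
  · have h1 := mainpart v lam S c a hnd hS hc ⟨u0, hu0S, hc0, hl0, hup⟩ huk k j t
    refine h1.congr fun s => ?_
    rw [show (-s - t j) = (-(t j) - s) from by ring,
      pd2_symm v lam S c a hF hE]
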